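/- Define for t ≥ 1 the pair H_t = ((2^{t-1}, 2^{t-1}, 2^{t-2}, 2^{t-2}, …, 2, 2, 1, 1, 1), (2^{t-1}, 2^{t-2}, …, 2, 1)). Then the level of H_t is κ(H_t) = 2^t - 1, and H_{t+1} = p₀(gen(H_t)), where gen is the generic link and p₀ is the zero-shift link; consequently every H_t is a codimension-3 decoration with λ₁ + λ₂ = κ(H_t) + 1. -/

import Mathlib

/-- Sort a list of integers in non-increasing order. -/
def rsort (l : List ℤ) : List ℤ := List.insertionSort (· ≥ ·) l

/-- Remove all non-positive parts (trailing zeros) from a partition. -/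
def strip (l : List ℤ) : List ℤ := l.filter (fun x => 0 < x)

/-- The smallest minimal link of a codimension-`c` pair of partitions `(λ, μ)`:
choose the `c` largest parts of `λ` (padding with zeros if needed), shift them by
`p = (c-2)k + 1 - (λ₁ + ⋯ + λ_c)` where `k = ∑ μⱼ`, merge with `μ` and re-sort;
the other partition becomes `(λ_{c+1}, …, λ_b)`. -/
def smlink (c : ℕ) (P : List ℤ × List ℤ) : List ℤ × List ℤ :=
  let p : ℤ := ((c : ℤ) - 2) * P.2.sum + 1 - (P.1.take c).sum
  (strip (rsort ((P.1.take c ++ List.replicate (c - P.1.length) 0).map (· + p) ++ P.2)),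
   strip (P.1.drop c))

/-- The smallest minimal link of `P` produces nonnegative parts, i.e. `λ_c + p ≥ 0`. -/
def ValidLink (c : ℕ) (P : List ℤ × List ℤ) : Prop :=
  0 ≤ P.1.getD (c - 1) 0 + (((c : ℤ) - 2) * P.2.sum + 1 - (P.1.take c).sum)

/-- A partition: a non-increasing list of positive integers. -/
def IsPartition (l : List ℤ) : Prop := l.Pairwise (· ≥ ·) ∧ ∀ x ∈ l, 0 < x

/-- A codimension-`c` decoration: a pair of partitions reachable to the complete
intersection pair `((1^c), (1))` by finitely many smallest minimal links, all of
whose intermediate links are valid (have nonnegative parts). -/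
def IsDecoration (c : ℕ) (P : List ℤ × List ℤ) : Prop :=
  IsPartition P.1 ∧ IsPartition P.2 ∧
  ∃ n : ℕ, (∀ m < n, ValidLink c ((smlink c)^[m] P)) ∧
    (smlink c)^[n] P = (List.replicate c 1, [1])

/-- The zero-shift link `p₀` of a codimension-3 pair `(λ, μ)` with `λ₁+λ₂ = k+1`:
`p₀(λ, μ) = (rsort(λ₁, λ₂, μ₁, …, μ_t), (λ₃, …, λ_b))`. -/
def p0 (P : List ℤ × List ℤ) : List ℤ × List ℤ :=
  (rsort (P.1.getD 0 0 :: P.1.getD 1 0 :: P.2), P.1.drop 2)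


/-- The generic link of a codimension-3 pair `(λ, μ)` with `k = ∑μⱼ`:
`gen(λ, μ) = ((k+1, k+1, k+1, μ₁, …, μ_t), (λ₁, …, λ_b))`. -/
def genlink (P : List ℤ × List ℤ) : List ℤ × List ℤ :=
  (rsort ((P.2.sum + 1) :: (P.2.sum + 1) :: (P.2.sum + 1) :: P.2), P.1)


/-- First partition of `H_t`: `(2^{t-1}, 2^{t-1}, 2^{t-2}, 2^{t-2}, …, 2, 2, 1, 1, 1)`. -/
def Hlam (t : ℕ) : List ℤ :=
  (List.range (2 * (t - 1))).map (fun i => (2 : ℤ) ^ (t - 1 - i / 2)) ++ [1, 1, 1]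

/-- Second partition of `H_t`: `(2^{t-1}, 2^{t-2}, …, 2, 1)`. -/
def Hmu (t : ℕ) : List ℤ := (List.range t).map (fun i => (2 : ℤ) ^ (t - 1 - i))

/-- The pair of partitions `H_t`. -/
def Hpair (t : ℕ) : List ℤ × List ℤ := (Hlam t, Hmu t)


lemma hmu_succ (t : ℕ) : Hmu (t + 1) = 2 ^ t :: Hmu t := by
  unfold Hmu
  rw [List.range_succ_eq_map]
  simp only [List.map_cons, List.map_map]
  have h0 : t + 1 - 1 - 0 = t := by omega
  rw [h0]
  congr 1
  apply List.map_congr_left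
  intro i hi
  simp only [Function.comp_apply]
  congr 1
  omega

lemma hlam_succ (s : ℕ) : Hlam (s + 2) = 2 ^ (s+1) :: 2 ^ (s+1) :: Hlam (s + 1) := by
  unfold Hlam
  have h1 : 2 * (s + 2 - 1) = (2 * (s + 1 - 1) + 1) + 1 := by omega
  rw [h1, List.range_succ_eq_map, List.range_succ_eq_map]
  simp only [List.map_cons, List.map_map, List.cons_append]
  have h2 : s + 2 - 1 - 0 / 2 = s + 1 := by omega
  rw [h2]
  congr 1
  congr 1
  congr 1
  apply List.map_congr_left
  intro i hi
  simp only [Function.comp_apply]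
  congr 1
  omega

lemma hlam_one : Hlam 1 = [1, 1, 1] := by decide
lemma hmu_one : Hmu 1 = [1] := by decide
lemma hmu_zero : Hmu 0 = [] := by decide

lemma hmu_sum (t : ℕ) : (Hmu t).sum = 2 ^ t - 1 := by
  induction t with
  | zero => simp [hmu_zero]
  | succ t ih =>
    rw [hmu_succ, List.sum_cons, ih, pow_succ]
    ring

lemma hlam_sum (s : ℕ) : (Hlam (s + 1)).sum = 2 ^ (s + 2) - 1 := by
  induction s with
  | zero => decide
  | succ s ih =>
    rw [hlam_succ, List.sum_cons, List.sum_cons, ih]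
    rw [show s + 1 + 2 = (s + 2) + 1 from rfl, pow_succ]
    ring

lemma two_le (s t : ℕ) (h : s ≤ t) : (2:ℤ)^s ≤ 2^t :=
  pow_le_pow_right₀ (by norm_num) h

lemma hmu_bound (t : ℕ) : ∀ x ∈ Hmu t, 0 < x ∧ x ≤ 2 ^ t := by
  induction t with
  | zero => simp [hmu_zero]
  | succ t ih =>
    rw [hmu_succ]
    rintro x hx
    rcases List.mem_cons.mp hx with rfl | hx
    · exact ⟨by positivity, two_le _ _ (by omega)⟩
    · obtain ⟨h1, h2⟩ := ih x hx
      exact ⟨h1, h2.trans (two_le _ _ (by omega))⟩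

lemma hlam_bound (t : ℕ) : ∀ x ∈ Hlam t, 0 < x ∧ x ≤ 2 ^ t := by
  induction t with
  | zero => intro x hx; fin_cases hx <;> norm_num
  | succ t ih =>
    match t with
    | 0 => intro x hx; rw [hlam_one] at hx; fin_cases hx <;> norm_num
    | (s+1) =>
      rw [hlam_succ]
      rintro x hx
      rcases List.mem_cons.mp hx with rfl | hx
      · exact ⟨by positivity, two_le _ _ (by omega)⟩
      rcases List.mem_cons.mp hx with rfl | hx
      · exact ⟨by positivity, two_le _ _ (by omega)⟩
      obtain ⟨h1, h2⟩ := ih x hx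
      exact ⟨h1, h2.trans (two_le _ _ (by omega))⟩

lemma hmu_sorted (t : ℕ) : (Hmu t).Pairwise (· ≥ ·) := by
  induction t with
  | zero => simp [hmu_zero]
  | succ t ih =>
    rw [hmu_succ, List.pairwise_cons]
    exact ⟨fun b hb => by have h1 := (hmu_bound t b hb).2; have h2 := two_le t (t+1) (by omega); linarith, ih⟩

lemma hlam_sorted (t : ℕ) : (Hlam t).Pairwise (· ≥ ·) := by
  induction t with
  | zero => decide
  | succ t ih =>
    match t with
    | 0 => rw [hlam_one]; decide
    | (s+1) =>
      rw [hlam_succ, List.pairwise_cons, List.pairwise_cons]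
      refine ⟨?_, ?_, ih⟩
      · rintro b hb
        rcases List.mem_cons.mp hb with rfl | hb
        · exact two_le _ _ (by omega)
        · have h1 := (hlam_bound _ b hb).2
          have h2 := two_le (s+1) (s+2) (by omega)
          linarith
      · intro b hb
        have h1 := (hlam_bound _ b hb).2
        have h2 := two_le (s+1) (s+2) (by omega)
        linarith

lemma hlam_cons (s : ℕ) : ∃ r, Hlam (s + 1) = 2 ^ s :: 2 ^ s :: r := by
  match s with
  | 0 => exact ⟨[1], by rw [hlam_one]; norm_num⟩
  | (u+1) => exact ⟨Hlam (u+1), hlam_succ u⟩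


lemma rsort_sorted {l : List ℤ} (h : l.Pairwise (· ≥ ·)) : rsort l = l :=
  List.Pairwise.insertionSort_eq h

lemma rsort_cons (a : ℤ) (l : List ℤ) :
    rsort (a :: l) = List.orderedInsert (· ≥ ·) a (rsort l) := rfl

lemma oi_here (a b : ℤ) (l : List ℤ) (h : a ≥ b) :
    List.orderedInsert (· ≥ ·) a (b :: l) = a :: b :: l := by
  simp [List.orderedInsert, h]

lemma oi_skip (a b : ℤ) (l : List ℤ) (h : ¬ a ≥ b) :
    List.orderedInsert (· ≥ ·) a (b :: l) = b :: List.orderedInsert (· ≥ ·) a l := by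
  simp [List.orderedInsert, h]

lemma oi_append (a : ℤ) (l l' : List ℤ) (h : ∀ x ∈ l, ¬ a ≥ x) :
    List.orderedInsert (· ≥ ·) a (l ++ l') = l ++ List.orderedInsert (· ≥ ·) a l' := by
  induction l with
  | nil => simp
  | cons b m ih =>
    rw [List.cons_append, oi_skip _ _ _ (h b (by simp)), ih (fun x hx => h x (by simp [hx])),
      List.cons_append]

lemma oi_bot (a : ℤ) (l : List ℤ) (h : ∀ x ∈ l, ¬ a ≥ x) :
    List.orderedInsert (· ≥ ·) a l = l ++ [a] := by
  induction l with
  | nil => rfl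
  | cons b m ih =>
    rw [oi_skip _ _ _ (h b (by simp)), ih (fun x hx => h x (by simp [hx])), List.cons_append]

lemma strip_pos {l : List ℤ} (h : ∀ x ∈ l, 0 < x) : strip l = l := by
  unfold strip
  rw [List.filter_eq_self]
  intro a ha
  simpa using h a ha

lemma strip_cons_pos (a : ℤ) (l : List ℤ) (h : 0 < a) : strip (a :: l) = a :: strip l := by
  unfold strip
  rw [List.filter_cons_of_pos]
  simpa using h

lemma strip_append (l l' : List ℤ) : strip (l ++ l') = strip l ++ strip l' := by
  unfold strip; exact List.filter_append _ _

lemma strip_zero : strip [(0:ℤ)] = [] := by decide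
lemma strip_zero2 : strip [(0:ℤ), 0] = [] := by decide


def Gp (s : ℕ) : List ℤ × List ℤ :=
  (2^(s+1) :: 2^s :: 2^s :: Hmu (s+1), (Hlam (s+1)).drop 1)

lemma step1 (s : ℕ) : smlink 3 (Hpair (s+2)) = Gp s := by
  obtain ⟨r, hr⟩ := hlam_cons s
  have hlam2 : Hlam (s+2) = 2^(s+1) :: 2^(s+1) :: 2^s :: 2^s :: r := by
    rw [hlam_succ, hr]
  have hmu2 : Hmu (s+2) = 2^(s+1) :: 2^s :: Hmu s := by rw [hmu_succ, hmu_succ]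
  simp only [smlink, Hpair]
  rw [hlam2, hmu2]
  simp only [List.take, List.length_cons, List.map_cons, List.sum_cons]
  have hrep : 3 - (r.length + 1 + 1 + 1 + 1) = 0 := by omega
  rw [hrep]
  have hC : ((↑(3:ℕ) - 2) * ((2:ℤ) ^ (s + 1) + (2 ^ s + (Hmu s).sum)) + 1 -
      (2 ^ (s + 1) + (2 ^ (s + 1) + (2 ^ s + (List.sum ([] : List ℤ)))))) = -2^s := by
    simp [hmu_sum]
    ring
  rw [hC]
  have e1 : (2:ℤ)^(s+1) + -2^s = 2^s := by ring
  have e2 : (2:ℤ)^s + -2^s = 0 := by ring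
  simp only [List.replicate, List.append_nil, List.map_cons, List.map_nil, e1, e2]
  have hsorted : ((2:ℤ)^(s+1) :: 2^s :: Hmu s).Pairwise (· ≥ ·) := hmu2 ▸ hmu_sorted (s+2)
  have hpos : ∀ x ∈ (2:ℤ)^(s+1) :: 2^s :: Hmu s, (0:ℤ) < x := by
    rw [← hmu2]; exact fun x hx => (hmu_bound _ x hx).1
  have p1 : (0:ℤ) < 2^(s+1) := by positivity
  have p2 : (0:ℤ) < 2^s := by positivity
  have hskip : ¬ ((2:ℤ)^s ≥ 2^(s+1)) := by
    have e : (2:ℤ)^(s+1) = 2*2^s := by ring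
    simp only [ge_iff_le, not_le]
    linarith
  have hhere : (2:ℤ)^s ≥ 2^s := le_refl _
  rw [List.cons_append, List.cons_append, List.singleton_append]
  rw [rsort_cons, rsort_cons, rsort_cons, rsort_sorted hsorted]
  rw [oi_bot 0 _ (fun x hx => not_le.mpr (hpos x hx))]
  rw [List.cons_append, List.cons_append]
  rw [oi_skip _ _ _ hskip, oi_here _ _ _ hhere]
  rw [oi_skip _ _ _ hskip, oi_here _ _ _ hhere]
  rw [strip_cons_pos _ _ p1, strip_cons_pos _ _ p2, strip_cons_pos _ _ p2,
    strip_cons_pos _ _ p2, strip_append, strip_zero, List.append_nil,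
    strip_pos (fun x hx => (hmu_bound s x hx).1)]
  have hdrop : strip (List.drop 3 ((2:ℤ)^(s+1) :: 2^(s+1) :: 2^s :: 2^s :: r)) = 2^s :: r := by
    simp only [List.drop]
    exact strip_pos (fun x hx => (hlam_bound (s+1) x (by rw [hr]; exact List.mem_cons_of_mem _ hx)).1)
  rw [hdrop]
  unfold Gp
  rw [hmu_succ, hr]
  simp

lemma step2 (s : ℕ) : smlink 3 (Gp s) = Hpair (s + 1) := by
  obtain ⟨r, hr⟩ := hlam_cons s
  have hdrop1 : (Hlam (s+1)).drop 1 = 2^s :: r := by rw [hr]; rfl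
  have hrsum : r.sum = 2^(s+2) - 1 - 2^(s+1) := by
    have h := hlam_sum s
    rw [hr] at h
    simp only [List.sum_cons] at h
    have e : (2:ℤ)^(s+1) = 2^s + 2^s := by ring
    linarith
  simp only [smlink, Gp]
  rw [hdrop1]
  simp only [List.take, List.length_cons, List.map_cons, List.sum_cons]
  have hrep : 3 - ((Hmu (s+1)).length + 1 + 1 + 1) = 0 := by omega
  rw [hrep]
  have hC : ((↑(3:ℕ) - 2) * ((2:ℤ) ^ s + r.sum) + 1 -
      (2 ^ (s + 1) + (2 ^ s + (2 ^ s + (List.sum ([] : List ℤ)))))) = -2^s := by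
    rw [hrsum]
    simp
    ring
  rw [hC]
  have e1 : (2:ℤ)^(s+1) + -2^s = 2^s := by ring
  have e2 : (2:ℤ)^s + -2^s = 0 := by ring
  simp only [List.replicate, List.append_nil, List.map_cons, List.map_nil, e1, e2]
  have hsorted2 : ((2:ℤ)^s :: r).Pairwise (· ≥ ·) := by
    have h := hlam_sorted (s+1)
    rw [hr] at h
    exact (List.pairwise_cons.mp h).2
  have hpos2 : ∀ x ∈ (2:ℤ)^s :: r, (0:ℤ) < x := by
    intro x hx
    exact (hlam_bound (s+1) x (by rw [hr]; exact List.mem_cons_of_mem _ hx)).1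
  have p2 : (0:ℤ) < 2^s := by positivity
  have hhere : (2:ℤ)^s ≥ 2^s := le_refl _
  rw [List.cons_append, List.cons_append, List.singleton_append]
  rw [rsort_cons, rsort_cons, rsort_cons, rsort_sorted hsorted2]
  rw [oi_bot 0 _ (fun x hx => not_le.mpr (hpos2 x hx))]
  rw [oi_append 0 _ [0] (fun x hx => not_le.mpr (hpos2 x hx))]
  have h00 : List.orderedInsert (· ≥ ·) (0:ℤ) [0] = [0, 0] := rfl
  rw [h00, List.cons_append]
  rw [oi_here _ _ _ hhere]
  rw [strip_cons_pos _ _ p2, strip_cons_pos _ _ p2, strip_append]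
  have hsr : strip r = r := strip_pos (fun x hx => hpos2 x (List.mem_cons_of_mem _ hx))
  have h002 : strip [(0:ℤ), 0] = [] := by decide
  rw [hsr, h002, List.append_nil]
  have hdrop3 : strip (List.drop 3 ((2:ℤ)^(s+1) :: 2^s :: 2^s :: Hmu (s+1))) = Hmu (s+1) := by
    simp only [List.drop]
    exact strip_pos (fun x hx => (hmu_bound (s+1) x hx).1)
  rw [hdrop3]
  unfold Hpair
  rw [hr]

lemma pow_expand (s : ℕ) : (2:ℤ)^(s+1) = 2^s + 2^s ∧ (2:ℤ)^(s+2) = 2^s + 2^s + 2^s + 2^s := by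
  constructor <;> ring

lemma V1 (s : ℕ) : ValidLink 3 (Hpair (s+2)) := by
  obtain ⟨r, hr⟩ := hlam_cons s
  have hlam2 : Hlam (s+2) = 2^(s+1) :: 2^(s+1) :: 2^s :: 2^s :: r := by
    rw [hlam_succ, hr]
  unfold ValidLink Hpair
  rw [hlam2, hmu_sum]
  simp only [List.take, List.sum_cons, List.getD, List.getElem?_cons_zero, List.getElem?_cons_succ, List.sum_nil]
  obtain ⟨e1, e2⟩ := pow_expand s
  simp
  linarith

lemma V2 (s : ℕ) : ValidLink 3 (Gp s) := by
  obtain ⟨r, hr⟩ := hlam_cons s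
  have hdrop1 : (Hlam (s+1)).drop 1 = 2^s :: r := by rw [hr]; rfl
  have hrsum : r.sum = 2^(s+2) - 1 - 2^(s+1) := by
    have h := hlam_sum s
    rw [hr] at h
    simp only [List.sum_cons] at h
    have e : (2:ℤ)^(s+1) = 2^s + 2^s := by ring
    linarith
  unfold ValidLink Gp
  rw [hdrop1]
  simp only [List.take, List.sum_cons, List.sum_nil, List.getD, List.getElem?_cons_zero, List.getElem?_cons_succ]
  obtain ⟨e1, e2⟩ := pow_expand s
  simp
  linarith

lemma two_step (s : ℕ) : (smlink 3)^[2] (Hpair (s+2)) = Hpair (s+1) := by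
  show smlink 3 (smlink 3 (Hpair (s+2))) = Hpair (s+1)
  rw [step1, step2]

lemma hpair_one : Hpair 1 = (List.replicate 3 1, [1]) := by
  unfold Hpair
  rw [hlam_one, hmu_one]
  rfl

lemma isdec (s : ℕ) : IsDecoration 3 (Hpair (s+1)) := by
  induction s with
  | zero =>
    exact ⟨⟨hlam_sorted _, fun x hx => (hlam_bound _ x hx).1⟩,
      ⟨hmu_sorted _, fun x hx => (hmu_bound _ x hx).1⟩, 0, by omega, hpair_one⟩
  | succ s ih =>
    obtain ⟨_, _, n, hv, hrch⟩ := ih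
    refine ⟨⟨hlam_sorted _, fun x hx => (hlam_bound _ x hx).1⟩,
      ⟨hmu_sorted _, fun x hx => (hmu_bound _ x hx).1⟩, n + 2, ?_, ?_⟩
    · intro m hm
      match m with
      | 0 => exact V1 s
      | 1 =>
        show ValidLink 3 ((smlink 3)^[1] (Hpair (s+2)))
        rw [Function.iterate_one, step1]
        exact V2 s
      | (m+2) =>
        have h : (smlink 3)^[m+2] (Hpair (s+2)) = (smlink 3)^[m] (Hpair (s+1)) := by
          rw [Function.iterate_add_apply, two_step]
        rw [h]
        exact hv m (by omega)
    · rw [Function.iterate_add_apply, two_step]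
      exact hrch

lemma part2 (s : ℕ) : Hpair (s+2) = p0 (genlink (Hpair (s+1))) := by
  have hk : (Hmu (s+1)).sum + 1 = 2^(s+1) := by rw [hmu_sum]; ring
  have hb : ∀ b ∈ Hmu (s+1), (2:ℤ)^(s+1) ≥ b := fun b h => (hmu_bound _ b h).2
  have hs1 : ((2:ℤ)^(s+1) :: 2^(s+1) :: 2^(s+1) :: Hmu (s+1)).Pairwise (· ≥ ·) := by
    rw [List.pairwise_cons, List.pairwise_cons, List.pairwise_cons]
    refine ⟨?_, ?_, hb, hmu_sorted _⟩
    · intro b h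
      rcases List.mem_cons.mp h with rfl | h
      · exact le_refl _
      rcases List.mem_cons.mp h with rfl | h
      · exact le_refl _
      · exact hb b h
    · intro b h
      rcases List.mem_cons.mp h with rfl | h
      · exact le_refl _
      · exact hb b h
  have hg : genlink (Hpair (s+1)) =
      (2^(s+1) :: 2^(s+1) :: 2^(s+1) :: Hmu (s+1), Hlam (s+1)) := by
    simp only [genlink, Hpair]
    rw [hk, rsort_sorted hs1]
  rw [hg]
  have hs2 : ((2:ℤ)^(s+1) :: 2^(s+1) :: Hlam (s+1)).Pairwise (· ≥ ·) := by
    rw [List.pairwise_cons, List.pairwise_cons]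
    have hb2 : ∀ b ∈ Hlam (s+1), (2:ℤ)^(s+1) ≥ b := by
      intro b h
      exact le_trans (hlam_bound _ b h).2 (two_le (s+1) (s+1) (le_refl _))
    refine ⟨?_, hb2, hlam_sorted _⟩
    intro b h
    rcases List.mem_cons.mp h with rfl | h
    · exact le_refl _
    · exact hb2 b h
  simp only [p0, List.getD, List.getElem?_cons_zero, List.getElem?_cons_succ, Option.getD, List.drop]
  rw [rsort_sorted hs2]
  unfold Hpair
  rw [hlam_succ, hmu_succ]

/-- For `t ≥ 1`: the level of `H_t` is `κ(H_t) = 2^t - 1`; moreover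
`H_{t+1} = p₀(gen(H_t))`; consequently every `H_t` is a codimension-3
decoration with `λ₁ + λ₂ = κ(H_t) + 1`. -/
theorem stmt11 (t : ℕ) (ht : 1 ≤ t) :
    (Hmu t).sum = 2 ^ t - 1 ∧
    Hpair (t + 1) = p0 (genlink (Hpair t)) ∧
    IsDecoration 3 (Hpair t) ∧
    (Hlam t).getD 0 0 + (Hlam t).getD 1 0 = (Hmu t).sum + 1 := by
  obtain ⟨s, rfl⟩ : ∃ s, t = s + 1 := ⟨t - 1, by omega⟩
  obtain ⟨r, hr⟩ := hlam_cons s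
  refine ⟨hmu_sum _, part2 s, isdec s, ?_⟩
  rw [hr, hmu_sum]
  simp only [List.getD, List.getElem?_cons_zero, List.getElem?_cons_succ, Option.getD]
  ring
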